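/- For integers 1 ≤ n < m and harmonic numbers H_k = ∑_{j=1}^k 1/j, the function f(x) = (1/(H_m − H_n)) · log((1 − x^{1/n})/(1 − x^{1/m})), 0 < x < 1, is a probability density on (0,1): f(x) ≥ 0 for all x ∈ (0,1) and ∫₀¹ f(x) dx = 1. -/

import Mathlib

open Set intervalIntegral

section LogRatioAux

open Real Filter Topology MeasureTheory

private lemma tk_eq (k : ℕ) (hk : 1 ≤ k) {x : ℝ} (hx : 0 ≤ x) :
    (x ^ ((1:ℝ)/k)) ^ k = x := by
  rw [← Real.rpow_natCast (x ^ ((1:ℝ)/k)) k, ← Real.rpow_mul hx]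
  rw [one_div, inv_mul_cancel₀ (by positivity : (k:ℝ) ≠ 0), Real.rpow_one]

private lemma geom_eq (k : ℕ) (hk : 1 ≤ k) {x : ℝ} (hx : 0 ≤ x) :
    (1 - x ^ ((1:ℝ)/k)) * ∑ j ∈ Finset.range k, (x ^ ((1:ℝ)/k)) ^ j = 1 - x := by
  have := geom_sum_mul (x ^ ((1:ℝ)/k)) k
  rw [tk_eq k hk hx] at this
  nlinarith [this]

private lemma one_sub_pos' (k : ℕ) (hk : 1 ≤ k) {x : ℝ} (hx : x ∈ Ioo (0:ℝ) 1) :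
    0 < 1 - x ^ ((1:ℝ)/k) := by
  have : x ^ ((1:ℝ)/k) < 1 := Real.rpow_lt_one hx.1.le hx.2 (by positivity)
  linarith

private lemma one_sub_ge (k : ℕ) (hk : 1 ≤ k) {x : ℝ} (hx : x ∈ Ioo (0:ℝ) 1) :
    (1 - x) / k ≤ 1 - x ^ ((1:ℝ)/k) := by
  have h1 := geom_eq k hk hx.1.le
  have ht0 : 0 ≤ x ^ ((1:ℝ)/k) := Real.rpow_nonneg hx.1.le _
  have ht1 : x ^ ((1:ℝ)/k) ≤ 1 := Real.rpow_le_one hx.1.le hx.2.le (by positivity)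
  have hS : ∑ j ∈ Finset.range k, (x ^ ((1:ℝ)/k)) ^ j ≤ k := by
    calc ∑ j ∈ Finset.range k, (x ^ ((1:ℝ)/k)) ^ j ≤ ∑ j ∈ Finset.range k, (1:ℝ) :=
      Finset.sum_le_sum fun j _ => pow_le_one₀ ht0 ht1
    _ = k := by simp
  have hk0 : (0:ℝ) < k := by exact_mod_cast hk
  rw [div_le_iff₀ hk0]
  nlinarith [one_sub_pos' k hk hx]

private lemma neg_log_le {u : ℝ} (hu : 0 < u) : -Real.log u ≤ 2 * u ^ (-(1/2) : ℝ) := by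
  have h1 : Real.log (u ^ (-(1/2):ℝ)) ≤ u ^ (-(1/2):ℝ) - 1 :=
    Real.log_le_sub_one_of_pos (by positivity)
  rw [Real.log_rpow hu] at h1
  nlinarith [Real.rpow_pos_of_pos hu (-(1/2):ℝ)]

private lemma intable_aux (k : ℕ) (hk : 1 ≤ k) :
    IntervalIntegrable (fun x => Real.log (1 - x ^ ((1:ℝ)/k))) MeasureTheory.volume 0 1 := by
  have hk0 : (0:ℝ) < k := by exact_mod_cast hk
  rw [intervalIntegrable_iff_integrableOn_Ioo_of_le (by norm_num)]
  have hg : IntervalIntegrable (fun x : ℝ => 2 * (k:ℝ) ^ ((1/2):ℝ) * (1 - x) ^ (-(1/2) : ℝ))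
      MeasureTheory.volume 0 1 := by
    have h1 : IntervalIntegrable (fun x : ℝ => x ^ (-(1/2) : ℝ)) MeasureTheory.volume 0 1 :=
      intervalIntegrable_rpow' (by norm_num)
    have h2 := (h1.comp_sub_left 1).symm
    norm_num at h2
    exact h2.const_mul _
  have hgI : IntegrableOn (fun x : ℝ => 2 * (k:ℝ) ^ ((1/2):ℝ) * (1 - x) ^ (-(1/2) : ℝ))
      (Ioo (0:ℝ) 1) := by
    rw [← intervalIntegrable_iff_integrableOn_Ioo_of_le (by norm_num)]
    exact hg
  apply hgI.mono'
  · apply ContinuousOn.aestronglyMeasurable _ measurableSet_Ioo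
    apply ContinuousOn.log
    · exact continuousOn_const.sub (fun x hx =>
        (Real.continuousAt_rpow_const x _ (Or.inl hx.1.ne')).continuousWithinAt)
    · exact fun x hx => (one_sub_pos' k hk hx).ne'
  · rw [ae_restrict_iff' measurableSet_Ioo]
    filter_upwards with x hx
    set u := 1 - x ^ ((1:ℝ)/k) with hu
    have hu0 : 0 < u := one_sub_pos' k hk hx
    have hu1 : u ≤ 1 := by
      have : 0 ≤ x ^ ((1:ℝ)/k) := Real.rpow_nonneg hx.1.le _
      simp only [hu]; linarith
    have hlog : Real.log u ≤ 0 := Real.log_nonpos hu0.le hu1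
    rw [Real.norm_eq_abs, abs_of_nonpos hlog]
    have h2 : -Real.log u ≤ 2 * u ^ (-(1/2):ℝ) := neg_log_le hu0
    have h3 : u ^ (-(1/2):ℝ) ≤ ((1-x)/k) ^ (-(1/2):ℝ) :=
      Real.rpow_le_rpow_of_nonpos (div_pos (by linarith [hx.2]) hk0)
        (one_sub_ge k hk hx) (by norm_num)
    have h4 : ((1-x)/k) ^ (-(1/2):ℝ) = (k:ℝ) ^ ((1/2):ℝ) * (1-x) ^ (-(1/2):ℝ) := by
      rw [div_eq_mul_inv, Real.mul_rpow (by linarith [hx.2]) (by positivity),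
        Real.inv_rpow hk0.le, ← Real.rpow_neg hk0.le]
      ring_nf
    calc -Real.log u ≤ 2 * u ^ (-(1/2):ℝ) := h2
      _ ≤ 2 * (((1-x)/k) ^ (-(1/2):ℝ)) := by linarith
      _ = 2 * (k:ℝ) ^ ((1/2):ℝ) * (1-x) ^ (-(1/2):ℝ) := by rw [h4]; ring

private noncomputable def Fk (k : ℕ) : ℝ → ℝ := fun x =>
  (x - 1) * Real.log (1 - x ^ ((1:ℝ)/k)) - ∑ j ∈ Finset.range k, x ^ (((j:ℝ)+1)/k) / ((j:ℝ)+1)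

private lemma Fk_deriv (k : ℕ) (hk : 1 ≤ k) {x : ℝ} (hx : x ∈ Ioo (0:ℝ) 1) :
    HasDerivAt (Fk k) (Real.log (1 - x ^ ((1:ℝ)/k))) x := by
  have hk0 : (0:ℝ) < k := by exact_mod_cast hk
  have hx0 := hx.1
  have ht := one_sub_pos' k hk hx
  have h1 : HasDerivAt (fun x : ℝ => x ^ ((1:ℝ)/k)) ((1:ℝ)/k * x ^ ((1:ℝ)/k - 1)) x :=
    Real.hasDerivAt_rpow_const (Or.inl hx0.ne')
  have h2 : HasDerivAt (fun x : ℝ => 1 - x ^ ((1:ℝ)/k)) (0 - (1:ℝ)/k * x ^ ((1:ℝ)/k - 1)) x :=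
    (hasDerivAt_const x 1).sub h1
  have h3 : HasDerivAt (fun x : ℝ => Real.log (1 - x ^ ((1:ℝ)/k)))
      ((0 - (1:ℝ)/k * x ^ ((1:ℝ)/k - 1)) / (1 - x ^ ((1:ℝ)/k))) x := h2.log ht.ne'
  have h4 : HasDerivAt (fun x : ℝ => (x - 1) * Real.log (1 - x ^ ((1:ℝ)/k)))
      (1 * Real.log (1 - x ^ ((1:ℝ)/k)) +
        (x - 1) * ((0 - (1:ℝ)/k * x ^ ((1:ℝ)/k - 1)) / (1 - x ^ ((1:ℝ)/k)))) x :=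
    ((hasDerivAt_id x).sub_const 1).mul h3
  have h5 : HasDerivAt (fun x : ℝ => ∑ j ∈ Finset.range k, x ^ (((j:ℝ)+1)/k) / ((j:ℝ)+1))
      (∑ j ∈ Finset.range k, ((((j:ℝ)+1)/k) * x ^ ((((j:ℝ)+1)/k) - 1)) / ((j:ℝ)+1)) x := by
    apply HasDerivAt.fun_sum
    intro j _
    exact (Real.hasDerivAt_rpow_const (Or.inl hx0.ne')).div_const _
  have h6 := h4.sub h5
  convert h6 using 1
  case e'_4 => rfl
  case e'_5 => rfl
  case e'_8 => rfl
  have hsum : ∑ j ∈ Finset.range k, ((((j:ℝ)+1)/k) * x ^ ((((j:ℝ)+1)/k) - 1)) / ((j:ℝ)+1)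
      = (1:ℝ)/k * x ^ ((1:ℝ)/k - 1) * ∑ j ∈ Finset.range k, (x ^ ((1:ℝ)/k)) ^ j := by
    rw [Finset.mul_sum]
    apply Finset.sum_congr rfl
    intro j _
    have hj : ((j:ℝ)+1) ≠ 0 := by positivity
    have he : (((j:ℝ)+1)/k) - 1 = ((1:ℝ)/k - 1) + j * ((1:ℝ)/k) := by field_simp; ring
    rw [he, Real.rpow_add hx0, ← Real.rpow_natCast (x ^ ((1:ℝ)/k)) j,
      ← Real.rpow_mul hx0.le]
    field_simp
  rw [hsum]
  have hgeom := geom_eq k hk hx0.le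
  set L := Real.log (1 - x ^ ((1:ℝ)/k))
  set A := x ^ ((1:ℝ)/k - 1)
  set S := ∑ j ∈ Finset.range k, (x ^ ((1:ℝ)/k)) ^ j
  set t := x ^ ((1:ℝ)/k)
  have key : (x - 1) * ((0 - (1:ℝ)/k * A) / (1 - t)) = (1:ℝ)/k * A * S := by
    have h7 : (x - 1) * (0 - (1:ℝ)/k * A) = ((1:ℝ)/k * A * S) * (1 - t) := by
      linear_combination (-(1/(k:ℝ)) * A) * hgeom
    calc (x - 1) * ((0 - (1:ℝ)/k * A) / (1 - t))
        = ((x - 1) * (0 - (1:ℝ)/k * A)) / (1 - t) := by ring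
      _ = (((1:ℝ)/k * A * S) * (1 - t)) / (1 - t) := by rw [h7]
      _ = (1:ℝ)/k * A * S := mul_div_cancel_right₀ _ ht.ne'
  rw [key]
  ring

private lemma Fk_tend0 (k : ℕ) (hk : 1 ≤ k) : Tendsto (Fk k) (𝓝[>] (0:ℝ)) (𝓝 0) := by
  have hk0 : (0:ℝ) < k := by exact_mod_cast hk
  have hz : ∀ y : ℝ, y ≠ 0 → (0:ℝ) ^ y = 0 := fun y hy => Real.zero_rpow hy
  have hca : ContinuousAt (Fk k) 0 := by
    apply ContinuousAt.sub
    · apply ContinuousAt.mul (by fun_prop)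
      apply ContinuousAt.log
      · exact (continuous_const.sub (Real.continuous_rpow_const (by positivity))).continuousAt
      · rw [hz _ (by positivity)]; norm_num
    · apply Continuous.continuousAt
      apply continuous_finset_sum
      intro j _
      exact (Real.continuous_rpow_const (by positivity)).div_const _
  have h0 : Fk k 0 = 0 := by
    simp only [Fk]
    rw [hz _ (by positivity)]
    rw [Finset.sum_eq_zero (fun j _ => by rw [hz _ (by positivity)]; simp)]
    simp
  have := hca.tendsto.mono_left (nhdsWithin_le_nhds (s := Ioi (0:ℝ)))
  rwa [h0] at this

private lemma Fk_tend1 (k : ℕ) (hk : 1 ≤ k) :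
    Tendsto (Fk k) (𝓝[<] (1:ℝ)) (𝓝 (-∑ j ∈ Finset.range k, (1:ℝ)/((j:ℝ)+1))) := by
  have hk0 : (0:ℝ) < k := by exact_mod_cast hk
  have hmem : Ioo (0:ℝ) 1 ∈ 𝓝[<] (1:ℝ) := Ioo_mem_nhdsLT_of_mem (by norm_num)
  have hB : Tendsto (fun x : ℝ => ∑ j ∈ Finset.range k, x ^ (((j:ℝ)+1)/k) / ((j:ℝ)+1))
      (𝓝[<] (1:ℝ)) (𝓝 (∑ j ∈ Finset.range k, (1:ℝ)/((j:ℝ)+1))) := by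
    have hc : ContinuousAt
        (fun x : ℝ => ∑ j ∈ Finset.range k, x ^ (((j:ℝ)+1)/k) / ((j:ℝ)+1)) 1 := by
      apply Continuous.continuousAt
      exact continuous_finset_sum _ fun j _ =>
        (Real.continuous_rpow_const (by positivity)).div_const _
    have := hc.tendsto.mono_left (nhdsWithin_le_nhds (s := Iio (1:ℝ)))
    simpa [Real.one_rpow] using this
  have hu : Tendsto (fun x : ℝ => 1 - x ^ ((1:ℝ)/k)) (𝓝[<] (1:ℝ)) (𝓝[>] 0) := by
    rw [tendsto_nhdsWithin_iff]
    constructor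
    · have hc : ContinuousAt (fun x : ℝ => 1 - x ^ ((1:ℝ)/k)) 1 :=
        continuousAt_const.sub (Real.continuousAt_rpow_const 1 _ (Or.inl one_ne_zero))
      have := hc.tendsto.mono_left (nhdsWithin_le_nhds (s := Iio (1:ℝ)))
      simpa [Real.one_rpow] using this
    · filter_upwards [hmem] with x hx
      exact one_sub_pos' k hk hx
  have hlog : Tendsto (fun y : ℝ => Real.log y * y) (𝓝[>] (0:ℝ)) (𝓝 0) := by
    have := tendsto_log_mul_rpow_nhdsGT_zero one_pos
    simpa [Real.rpow_one] using this
  have hUL : Tendsto (fun x : ℝ => Real.log (1 - x ^ ((1:ℝ)/k)) * (1 - x ^ ((1:ℝ)/k)))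
      (𝓝[<] (1:ℝ)) (𝓝 0) := hlog.comp hu
  have hS : Tendsto (fun x : ℝ => ∑ j ∈ Finset.range k, (x ^ ((1:ℝ)/k)) ^ j)
      (𝓝[<] (1:ℝ)) (𝓝 (k:ℝ)) := by
    have hc : ContinuousAt (fun x : ℝ => ∑ j ∈ Finset.range k, (x ^ ((1:ℝ)/k)) ^ j) 1 := by
      apply Continuous.continuousAt
      exact continuous_finset_sum _ fun j _ =>
        (Real.continuous_rpow_const (by positivity)).pow j
    have := hc.tendsto.mono_left (nhdsWithin_le_nhds (s := Iio (1:ℝ)))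
    simpa [Real.one_rpow] using this
  have hA : Tendsto (fun x : ℝ => (x - 1) * Real.log (1 - x ^ ((1:ℝ)/k)))
      (𝓝[<] (1:ℝ)) (𝓝 0) := by
    have hprod := (hUL.mul hS).neg
    rw [zero_mul, neg_zero] at hprod
    refine Tendsto.congr' ?_ hprod
    filter_upwards [hmem] with x hx
    have hg := geom_eq k hk hx.1.le
    linear_combination (-Real.log (1 - x ^ ((1:ℝ)/k))) * hg
  have := hA.sub hB
  rw [zero_sub] at this
  exact this

private lemma key_int (k : ℕ) (hk : 1 ≤ k) :
    ∫ x in (0:ℝ)..1, Real.log (1 - x ^ ((1:ℝ)/k))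
      = -∑ j ∈ Finset.range k, (1:ℝ)/((j:ℝ)+1) := by
  have h := intervalIntegral.integral_eq_sub_of_hasDerivAt_of_tendsto (a := (0:ℝ)) (b := 1)
    one_pos (fun x hx => Fk_deriv k hk hx) (intable_aux k hk) (Fk_tend0 k hk) (Fk_tend1 k hk)
  rw [h]
  ring

end LogRatioAux

/-- The function `f(x) = log((1-x^{1/n})/(1-x^{1/m}))/(H_m - H_n)` is a
probability density on `(0,1)`. -/
theorem log_ratio_density
    (n m : ℕ) (hn : 1 ≤ n) (hnm : n < m)
    (H : ℕ → ℝ) (hH : ∀ k, H k = ∑ j ∈ Finset.range k, (1 : ℝ) / (j + 1))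
    (f : ℝ → ℝ)
    (hf : ∀ x, f x = (1 / (H m - H n)) *
      Real.log ((1 - x ^ ((1:ℝ)/n)) / (1 - x ^ ((1:ℝ)/m)))) :
    (∀ x ∈ Ioo (0:ℝ) 1, 0 ≤ f x) ∧ (∫ x in (0:ℝ)..1, f x) = 1 := by
  have hm : 1 ≤ m := hn.trans hnm.le
  have hpos : 0 < H m - H n := by
    rw [hH m, hH n]
    rw [← Finset.sum_range_add_sum_Ico _ hnm.le]
    have : 0 < ∑ j ∈ Finset.Ico n m, (1:ℝ)/(j+1) :=
      Finset.sum_pos (fun j _ => by positivity) (Finset.nonempty_Ico.mpr hnm)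
    linarith
  constructor
  · intro x hx
    rw [hf x]
    apply mul_nonneg (by positivity)
    apply Real.log_nonneg
    rw [le_div_iff₀ (one_sub_pos' m hm hx)]
    have : x ^ ((1:ℝ)/n) ≤ x ^ ((1:ℝ)/m) := by
      apply Real.rpow_le_rpow_of_exponent_ge hx.1 hx.2.le
      apply one_div_le_one_div_of_le (by exact_mod_cast hn) (by exact_mod_cast hnm.le)
    linarith
  · have hsplit : (∫ x in (0:ℝ)..1,
        Real.log ((1 - x ^ ((1:ℝ)/n)) / (1 - x ^ ((1:ℝ)/m))))
        = ∫ x in (0:ℝ)..1,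
          (Real.log (1 - x ^ ((1:ℝ)/n)) - Real.log (1 - x ^ ((1:ℝ)/m))) := by
      apply intervalIntegral.integral_congr
      intro x hx
      rw [uIcc_of_le (by norm_num)] at hx
      rcases eq_or_lt_of_le hx.1 with h0 | h0
      · simp only [← h0, show (0:ℝ) ^ ((1:ℝ)/n) = 0 from Real.zero_rpow (by positivity),
          show (0:ℝ) ^ ((1:ℝ)/m) = 0 from Real.zero_rpow (by positivity)]
        norm_num
      rcases eq_or_lt_of_le hx.2 with h1 | h1
      · simp only [h1, Real.one_rpow]
        norm_num
      · exact Real.log_div (one_sub_pos' n hn ⟨h0, h1⟩).ne'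
          (one_sub_pos' m hm ⟨h0, h1⟩).ne'
    have hint : (∫ x in (0:ℝ)..1,
        Real.log ((1 - x ^ ((1:ℝ)/n)) / (1 - x ^ ((1:ℝ)/m)))) = H m - H n := by
      rw [hsplit, intervalIntegral.integral_sub (intable_aux n hn) (intable_aux m hm),
        key_int n hn, key_int m hm, hH n, hH m]
      ring
    have : (∫ x in (0:ℝ)..1, f x) = (1 / (H m - H n)) *
        ∫ x in (0:ℝ)..1, Real.log ((1 - x ^ ((1:ℝ)/n)) / (1 - x ^ ((1:ℝ)/m))) := by
      rw [← intervalIntegral.integral_const_mul]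
      apply intervalIntegral.integral_congr
      intro x _
      rw [hf x]
    rw [this, hint, one_div, inv_mul_cancel₀ hpos.ne']
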